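/- arXiv:2008.01317 — 2 statements merged into one kernel-verified Lean document; each statement's English description precedes it below -/
import Mathlib

section
/- The spectrum of A_α(K_{a,b}) with n = a+b consists of: (αn + √(α²n² + 4ab(1−2α)))/2 and (αn − √(α²n² + 4ab(1−2α)))/2 each with multiplicity 1, αa with multiplicity b−1, and αb with multiplicity a−1. -/
open Matrix Polynomial

open scoped Classical in
/-- The real adjacency matrix of a simple graph. -/
noncomputable def adjMat {V : Type*} (G : SimpleGraph V) : Matrix V V ℝ :=
  Matrix.of fun u v => if G.Adj u v then 1 else 0

open scoped Classical in
/-- The diagonal degree matrix of a simple graph. -/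
noncomputable def degMatrix {V : Type*} (G : SimpleGraph V) : Matrix V V ℝ :=
  Matrix.of fun u v => if u = v then ((G.neighborSet u).ncard : ℝ) else 0

/-- `A_α(G) = α D(G) + (1-α) A(G)`. -/
noncomputable def Aalpha {V : Type*} (G : SimpleGraph V) (α : ℝ) : Matrix V V ℝ :=
  α • degMatrix G + (1 - α) • adjMat G

open scoped Classical in
/-- The `M`-coronal `Γ_M(θ) = jᵀ (θ I - M)⁻¹ j`, the sum of the entries of `(θ I - M)⁻¹`. -/
noncomputable def coronal {n : Type*} [Fintype n] (M : Matrix n n ℝ) (θ : ℝ) : ℝ :=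
  ∑ i, ∑ j, (θ • (1 : Matrix n n ℝ) - M)⁻¹ i j

open scoped Classical in
/-- The vertex-edge incidence matrix of a simple graph. -/
noncomputable def incMat {V : Type*} (G : SimpleGraph V) : Matrix V G.edgeSet ℝ :=
  Matrix.of fun u e => if u ∈ (e : Sym2 V) then 1 else 0

/-- The corona `G₁ ∘ G₂`: one copy of `G₁` and one copy of `G₂` for every vertex of `G₁`,
joining vertex `i` of `G₁` to every vertex of the `i`-th copy of `G₂`. -/
def corona {V₁ V₂ : Type*} (G₁ : SimpleGraph V₁) (G₂ : SimpleGraph V₂) :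
    SimpleGraph (V₁ ⊕ V₁ × V₂) where
  Adj x y :=
    match x, y with
    | Sum.inl u, Sum.inl v => G₁.Adj u v
    | Sum.inl u, Sum.inr p => u = p.1
    | Sum.inr p, Sum.inl u => u = p.1
    | Sum.inr p, Sum.inr q => p.1 = q.1 ∧ G₂.Adj p.2 q.2
  symm := by
    constructor
    rintro (u | p) (v | q) h
    · exact G₁.adj_symm h
    · exact h
    · exact h
    · exact ⟨h.1.symm, G₂.adj_symm h.2⟩
  loopless := by
    constructor
    rintro (u | p) h
    · exact G₁.loopless.irrefl u h
    · exact G₂.loopless.irrefl p.2 h.2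

/-- The edge corona `G₁ ◊ G₂`: one copy of `G₁` and one copy of `G₂` for every edge of `G₁`,
joining both endpoints of edge `e` of `G₁` to every vertex of the copy of `G₂` indexed by `e`. -/
def edgeCorona {V₁ V₂ : Type*} (G₁ : SimpleGraph V₁) (G₂ : SimpleGraph V₂) :
    SimpleGraph (V₁ ⊕ (G₁.edgeSet × V₂)) where
  Adj x y :=
    match x, y with
    | Sum.inl u, Sum.inl v => G₁.Adj u v
    | Sum.inl u, Sum.inr p => u ∈ (p.1 : Sym2 V₁)
    | Sum.inr p, Sum.inl u => u ∈ (p.1 : Sym2 V₁)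
    | Sum.inr p, Sum.inr q => p.1 = q.1 ∧ G₂.Adj p.2 q.2
  symm := by
    constructor
    rintro (u | p) (v | q) h
    · exact G₁.adj_symm h
    · exact h
    · exact h
    · exact ⟨h.1.symm, G₂.adj_symm h.2⟩
  loopless := by
    constructor
    rintro (u | p) h
    · exact G₁.loopless.irrefl u h
    · exact G₂.loopless.irrefl p.2 h.2

/-- The `R`-vertex corona `G₁ ⊙ G₂`: the `R`-graph of `G₁` (a new vertex per edge, joined to the
endpoints of that edge) together with one copy of `G₂` for every vertex of `G₁`, joining vertex
`i` of `G₁` to every vertex of the `i`-th copy of `G₂`. -/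
def RvertexCorona {V₁ V₂ : Type*} (G₁ : SimpleGraph V₁) (G₂ : SimpleGraph V₂) :
    SimpleGraph (V₁ ⊕ (G₁.edgeSet ⊕ V₁ × V₂)) where
  Adj x y :=
    match x, y with
    | Sum.inl u, Sum.inl v => G₁.Adj u v
    | Sum.inl u, Sum.inr (Sum.inl e) => u ∈ (e : Sym2 V₁)
    | Sum.inr (Sum.inl e), Sum.inl u => u ∈ (e : Sym2 V₁)
    | Sum.inl u, Sum.inr (Sum.inr p) => u = p.1
    | Sum.inr (Sum.inr p), Sum.inl u => u = p.1
    | Sum.inr (Sum.inr p), Sum.inr (Sum.inr q) => p.1 = q.1 ∧ G₂.Adj p.2 q.2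
    | _, _ => False
  symm := by
    constructor
    rintro (u | (e | p)) (v | (f | q)) h
    all_goals first
      | exact G₁.adj_symm h
      | exact h
      | exact ⟨h.1.symm, G₂.adj_symm h.2⟩
  loopless := by
    constructor
    rintro (u | (e | p)) h
    · exact G₁.loopless.irrefl u h
    · exact h
    · exact G₂.loopless.irrefl p.2 h.2

/-- The `R`-edge corona `G₁ ⊖ G₂`: the `R`-graph of `G₁` (a new vertex per edge, joined to the
endpoints of that edge) together with one copy of `G₂` for every edge of `G₁`, joining the new
vertex of edge `e` to every vertex of the copy of `G₂` indexed by `e`. -/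
def RedgeCorona {V₁ V₂ : Type*} (G₁ : SimpleGraph V₁) (G₂ : SimpleGraph V₂) :
    SimpleGraph (V₁ ⊕ (G₁.edgeSet ⊕ G₁.edgeSet × V₂)) where
  Adj x y :=
    match x, y with
    | Sum.inl u, Sum.inl v => G₁.Adj u v
    | Sum.inl u, Sum.inr (Sum.inl e) => u ∈ (e : Sym2 V₁)
    | Sum.inr (Sum.inl e), Sum.inl u => u ∈ (e : Sym2 V₁)
    | Sum.inr (Sum.inl e), Sum.inr (Sum.inr p) => e = p.1
    | Sum.inr (Sum.inr p), Sum.inr (Sum.inl e) => e = p.1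
    | Sum.inr (Sum.inr p), Sum.inr (Sum.inr q) => p.1 = q.1 ∧ G₂.Adj p.2 q.2
    | _, _ => False
  symm := by
    constructor
    rintro (u | (e | p)) (v | (f | q)) h
    all_goals first
      | exact G₁.adj_symm h
      | exact h
      | exact h.symm
      | exact ⟨h.1.symm, G₂.adj_symm h.2⟩
  loopless := by
    constructor
    rintro (u | (e | p)) h
    · exact G₁.loopless.irrefl u h
    · exact h
    · exact G₂.loopless.irrefl p.2 h.2


lemma det_smul_one_add_smul_J (n : ℕ) (hn : 1 ≤ n) (x t : ℝ) :
    det (x • (1 : Matrix (Fin n) (Fin n) ℝ) + t • Matrix.of (fun _ _ => (1:ℝ)))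
      = (x + n * t) * x ^ (n - 1) := by
  obtain ⟨m, rfl⟩ : ∃ m, n = m + 1 := ⟨n - 1, (Nat.succ_pred_eq_of_pos hn).symm⟩
  simp only [Nat.add_sub_cancel]
  rcases eq_or_ne x 0 with rfl | hx
  · rcases Nat.eq_zero_or_pos m with rfl | hm
    · rw [Matrix.det_fin_one]
      simp [Matrix.one_apply]
    · rw [Matrix.det_zero_of_row_eq (i := ⟨0, by omega⟩) (j := ⟨1, by omega⟩)
        (by simp [Fin.ext_iff]) ?_]
      · simp [Nat.pos_iff_ne_zero.mp hm]
      · funext j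
        simp [Matrix.one_apply, Fin.ext_iff]
  · have h : x • (1 : Matrix (Fin (m+1)) (Fin (m+1)) ℝ) + t • Matrix.of (fun _ _ => (1:ℝ))
        = x • (1 + Matrix.replicateCol (Fin 1) (fun _ => t/x) * Matrix.replicateRow (Fin 1) (fun _ => (1:ℝ))) := by
      ext i j
      simp [Matrix.mul_apply, Matrix.one_apply]
      split_ifs <;> field_simp <;> ring
    rw [h, det_smul]
    erw [det_one_add_replicateCol_mul_replicateRow]
    simp only [dotProduct, Finset.sum_const, Finset.card_univ, Fintype.card_fin, nsmul_eq_mul]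
    field_simp
    ring

lemma JJ_mul (a b d : ℕ) :
    (Matrix.of (fun _ _ => (1:ℝ)) : Matrix (Fin a) (Fin b) ℝ)
      * (Matrix.of (fun _ _ => (1:ℝ)) : Matrix (Fin b) (Fin d) ℝ)
    = (b : ℝ) • (Matrix.of (fun _ _ => (1:ℝ)) : Matrix (Fin a) (Fin d) ℝ) := by
  ext i j
  simp [Matrix.mul_apply]

lemma schur_term (a b : ℕ) (c z : ℝ) (hz : z ≠ 0) [Invertible (z • (1 : Matrix (Fin b) (Fin b) ℝ))] :
    ((-c) • Matrix.of (fun _ _ => (1:ℝ)) : Matrix (Fin a) (Fin b) ℝ)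
      * ⅟(z • (1 : Matrix (Fin b) (Fin b) ℝ))
      * ((-c) • Matrix.of (fun _ _ => (1:ℝ)) : Matrix (Fin b) (Fin a) ℝ)
    = (c^2 * b / z) • (Matrix.of (fun _ _ => (1:ℝ)) : Matrix (Fin a) (Fin a) ℝ) := by
  have hinv : ⅟(z • (1 : Matrix (Fin b) (Fin b) ℝ)) = z⁻¹ • 1 := by
    apply invOf_eq_right_inv
    rw [smul_mul_smul_comm, one_mul, mul_inv_cancel₀ hz, one_smul]
  rw [hinv]
  simp only [Matrix.smul_mul, Matrix.mul_smul, Matrix.mul_one, JJ_mul, smul_smul]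
  congr 1
  field_simp

lemma det_bip_blocks (a b : ℕ) (ha : 1 ≤ a) (hb : 1 ≤ b) (x y c : ℝ) :
    det (Matrix.fromBlocks (x • (1 : Matrix (Fin a) (Fin a) ℝ))
        ((-c) • Matrix.of (fun _ _ => (1:ℝ)))
        ((-c) • Matrix.of (fun _ _ => (1:ℝ))) (y • (1 : Matrix (Fin b) (Fin b) ℝ)))
      = (x * y - c^2 * a * b) * x ^ (a - 1) * y ^ (b - 1) := by
  rcases eq_or_ne y 0 with rfl | hy
  · rcases eq_or_ne b 1 with rfl | hb2
    · rcases eq_or_ne x 0 with rfl | hx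
      · rcases eq_or_ne a 1 with rfl | ha2
        · rw [← Matrix.det_reindex_self finSumFinEquiv, Matrix.det_fin_two]
          have e0 : (finSumFinEquiv (m := 1) (n := 1)).symm 0 = Sum.inl 0 := rfl
          have e1 : (finSumFinEquiv (m := 1) (n := 1)).symm 1 = Sum.inr 0 := rfl
          simp [e0, e1]
          ring
        · rw [Matrix.det_zero_of_row_eq (i := Sum.inl ⟨0, by omega⟩) (j := Sum.inl ⟨1, by omega⟩)
            (by simp [Fin.ext_iff]) ?_]
          · have h1 : a - 1 ≠ 0 := by omega
            simp [h1]
          · funext j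
            cases j <;> simp [Matrix.one_apply, Fin.ext_iff]
      · haveI : Invertible (x • (1 : Matrix (Fin a) (Fin a) ℝ)) := by
          apply Matrix.invertibleOfIsUnitDet
          simp [det_smul, isUnit_iff_ne_zero, hx]
        rw [Matrix.det_fromBlocks₁₁, schur_term 1 a c x hx]
        have h0 : (0:ℝ) • (1 : Matrix (Fin 1) (Fin 1) ℝ)
            - (c^2 * a / x) • (Matrix.of (fun _ _ => (1:ℝ)) : Matrix (Fin 1) (Fin 1) ℝ)
            = (0 + -(c^2 * a / x)) • (1 : Matrix (Fin 1) (Fin 1) ℝ) := by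
          ext i j
          simp [Matrix.one_apply, Subsingleton.elim i j]
        rw [h0, det_smul, det_smul, det_one]
        obtain ⟨m, rfl⟩ : ∃ m, a = m + 1 := ⟨a - 1, (Nat.succ_pred_eq_of_pos ha).symm⟩
        simp only [Nat.add_sub_cancel]
        field_simp
        simp only [Fintype.card_fin, det_one, mul_one]
        field_simp
        simp only [Nat.sub_self, pow_zero]
        ring
    · rw [Matrix.det_zero_of_row_eq (i := Sum.inr ⟨0, by omega⟩) (j := Sum.inr ⟨1, by omega⟩)
        (by simp [Fin.ext_iff]) ?_]
      · have h1 : b - 1 ≠ 0 := by omega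
        simp [h1]
      · funext j
        cases j <;> simp [Matrix.one_apply, Fin.ext_iff]
  · haveI : Invertible (y • (1 : Matrix (Fin b) (Fin b) ℝ)) := by
      apply Matrix.invertibleOfIsUnitDet
      simp [det_smul, isUnit_iff_ne_zero, hy]
    rw [Matrix.det_fromBlocks₂₂, schur_term a b c y hy]
    have h1 : x • (1 : Matrix (Fin a) (Fin a) ℝ)
        - (c^2 * b / y) • (Matrix.of (fun _ _ => (1:ℝ)) : Matrix (Fin a) (Fin a) ℝ)
        = x • 1 + (-(c^2 * b / y)) • Matrix.of (fun _ _ => (1:ℝ)) := by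
      rw [sub_eq_add_neg, neg_smul]
    rw [h1, det_smul_one_add_smul_J a ha, det_smul, det_one]
    obtain ⟨m, rfl⟩ : ∃ m, b = m + 1 := ⟨b - 1, (Nat.succ_pred_eq_of_pos hb).symm⟩
    simp only [Nat.add_sub_cancel]
    field_simp
    simp only [Fintype.card_fin]
    ring

theorem Aalpha_spectrum_completeBipartite (a b : ℕ) (ha : 1 ≤ a) (hb : 1 ≤ b)
    (α : ℝ) (h0 : 0 ≤ α) (h1 : α ≤ 1) (ν : ℝ) :
    det (ν • (1 : Matrix (Fin a ⊕ Fin b) (Fin a ⊕ Fin b) ℝ)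
        - Aalpha (completeBipartiteGraph (Fin a) (Fin b)) α)
      = (ν - (α * (a + b)
            + Real.sqrt (α ^ 2 * ((a : ℝ) + b) ^ 2 + 4 * a * b * (1 - 2 * α))) / 2) *
        (ν - (α * (a + b)
            - Real.sqrt (α ^ 2 * ((a : ℝ) + b) ^ 2 + 4 * a * b * (1 - 2 * α))) / 2) *
        (ν - α * a) ^ (b - 1) * (ν - α * b) ^ (a - 1) := by
  have key : ν • (1 : Matrix (Fin a ⊕ Fin b) (Fin a ⊕ Fin b) ℝ)
      - Aalpha (completeBipartiteGraph (Fin a) (Fin b)) α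
      = Matrix.fromBlocks ((ν - α * b) • (1 : Matrix (Fin a) (Fin a) ℝ))
          ((-(1-α)) • Matrix.of (fun _ _ => (1:ℝ)))
          ((-(1-α)) • Matrix.of (fun _ _ => (1:ℝ)))
          ((ν - α * a) • (1 : Matrix (Fin b) (Fin b) ℝ)) := by
    have hl : ∀ i : Fin a,
        ((completeBipartiteGraph (Fin a) (Fin b)).neighborSet (Sum.inl i)).ncard = b := by
      intro i
      have h : (completeBipartiteGraph (Fin a) (Fin b)).neighborSet (Sum.inl i)
          = Set.range Sum.inr := by
        ext w; cases w <;> simp [SimpleGraph.neighborSet]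
      rw [h, ← Set.image_univ, Set.ncard_image_of_injective _ Sum.inr_injective]
      simp [Set.ncard_univ]
    have hr : ∀ i : Fin b,
        ((completeBipartiteGraph (Fin a) (Fin b)).neighborSet (Sum.inr i)).ncard = a := by
      intro i
      have h : (completeBipartiteGraph (Fin a) (Fin b)).neighborSet (Sum.inr i)
          = Set.range Sum.inl := by
        ext w; cases w <;> simp [SimpleGraph.neighborSet]
      rw [h, ← Set.image_univ, Set.ncard_image_of_injective _ Sum.inl_injective]
      simp [Set.ncard_univ]
    ext i j
    cases i <;> cases j <;>
      simp [Aalpha, degMatrix, adjMat, Matrix.one_apply, hl, hr, Sum.inl.injEq,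
        Sum.inr.injEq] <;>
      split_ifs <;> ring
  rw [key, det_bip_blocks a b ha hb (ν - α * b) (ν - α * a) (1 - α)]
  have ha' : (1:ℝ) ≤ (a:ℝ) := by exact_mod_cast ha
  have hb' : (1:ℝ) ≤ (b:ℝ) := by exact_mod_cast hb
  have hD : 0 ≤ α ^ 2 * ((a : ℝ) + b) ^ 2 + 4 * a * b * (1 - 2 * α) := by
    nlinarith [sq_nonneg (α * ((a:ℝ) - b)), sq_nonneg (α - 1),
      mul_nonneg (mul_nonneg (by linarith : (0:ℝ) ≤ (a:ℝ)) (by linarith : (0:ℝ) ≤ (b:ℝ)))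
        (sq_nonneg (α - 1))]
  have hs := Real.mul_self_sqrt hD
  have hquad : (ν - α * b) * (ν - α * a) - (1 - α)^2 * a * b
      = (ν - (α * (a + b)
            + Real.sqrt (α ^ 2 * ((a : ℝ) + b) ^ 2 + 4 * a * b * (1 - 2 * α))) / 2) *
        (ν - (α * (a + b)
            - Real.sqrt (α ^ 2 * ((a : ℝ) + b) ^ 2 + 4 * a * b * (1 - 2 * α))) / 2) := by
    linear_combination ((1:ℝ)/4) * hs
  rw [hquad]
  ring
end

section
/- If H is any graph and G₁, G₂ are α-isospectral graphs with equal A_α-coronals Γ_{A_α(G₁)}(ν) = Γ_{A_α(G₂)}(ν) (as rational functions), then H ∘ G₁ and H ∘ G₂ are α-isospectral. -/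
open Matrix Polynomial

section Aux

open scoped Classical

variable {W V : Type*} [Fintype W] [Fintype V] [DecidableEq W] [DecidableEq V]

@[simp] lemma corona_adj_inl_inl (H : SimpleGraph W) (G : SimpleGraph V) (u v : W) :
    (corona H G).Adj (Sum.inl u) (Sum.inl v) ↔ H.Adj u v := Iff.rfl

@[simp] lemma corona_adj_inl_inr (H : SimpleGraph W) (G : SimpleGraph V) (u : W) (p : W × V) :
    (corona H G).Adj (Sum.inl u) (Sum.inr p) ↔ u = p.1 := Iff.rfl

@[simp] lemma corona_adj_inr_inl (H : SimpleGraph W) (G : SimpleGraph V) (u : W) (p : W × V) :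
    (corona H G).Adj (Sum.inr p) (Sum.inl u) ↔ u = p.1 := Iff.rfl

@[simp] lemma corona_adj_inr_inr (H : SimpleGraph W) (G : SimpleGraph V) (p q : W × V) :
    (corona H G).Adj (Sum.inr p) (Sum.inr q) ↔ p.1 = q.1 ∧ G.Adj p.2 q.2 := Iff.rfl

lemma corona_nbhd_inl (H : SimpleGraph W) (G : SimpleGraph V) (w : W) :
    (corona H G).neighborSet (Sum.inl w) =
      Sum.inl '' H.neighborSet w ∪ Sum.inr '' (Prod.mk w '' (Set.univ : Set V)) := by
  ext (v | p)
  · simp [SimpleGraph.neighborSet]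
  · simp [SimpleGraph.neighborSet, eq_comm, Prod.ext_iff]

lemma corona_deg_inl (H : SimpleGraph W) (G : SimpleGraph V) (w : W) :
    ((corona H G).neighborSet (Sum.inl w)).ncard
      = (H.neighborSet w).ncard + Fintype.card V := by
  rw [corona_nbhd_inl]
  rw [Set.ncard_union_eq ?disj (Set.toFinite _) (Set.toFinite _)]
  · rw [Set.ncard_image_of_injective _ Sum.inl_injective,
      Set.ncard_image_of_injective _ Sum.inr_injective,
      Set.ncard_image_of_injective _ (fun a b h => by simpa using h : Function.Injective (Prod.mk w)),
      Set.ncard_univ, Nat.card_eq_fintype_card]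
  case disj =>
    rw [Set.disjoint_left]
    rintro y ⟨a, -, rfl⟩ ⟨b, -, h⟩
    simp at h

lemma corona_nbhd_inr (H : SimpleGraph W) (G : SimpleGraph V) (p : W × V) :
    (corona H G).neighborSet (Sum.inr p) =
      {Sum.inl p.1} ∪ Sum.inr '' (Prod.mk p.1 '' G.neighborSet p.2) := by
  ext (v | q)
  · simp [SimpleGraph.neighborSet]
  · simp only [SimpleGraph.neighborSet, Set.mem_setOf_eq, corona_adj_inr_inr,
      Set.mem_union, Set.mem_singleton_iff, Set.mem_image, Prod.ext_iff]
    constructor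
    · rintro ⟨h1, h2⟩
      exact Or.inr ⟨(p.1, q.2), ⟨q.2, h2, rfl, rfl⟩, by simp [h1]⟩
    · rintro (h | ⟨r, ⟨v, hv, h1, h2⟩, h3⟩)
      · exact absurd h (by simp)
      · obtain ⟨rfl⟩ : r = q := by simpa using h3
        exact ⟨h1.symm ▸ rfl, h2 ▸ hv⟩

lemma corona_deg_inr (H : SimpleGraph W) (G : SimpleGraph V) (p : W × V) :
    ((corona H G).neighborSet (Sum.inr p)).ncard
      = (G.neighborSet p.2).ncard + 1 := by
  rw [corona_nbhd_inr]
  rw [Set.ncard_union_eq ?disj (Set.toFinite _) (Set.toFinite _)]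
  · rw [Set.ncard_singleton,
      Set.ncard_image_of_injective _ Sum.inr_injective,
      Set.ncard_image_of_injective _
        (fun a b h => by simpa using h : Function.Injective (Prod.mk p.1))]
    omega
  case disj =>
    rw [Set.disjoint_left]
    rintro y rfl ⟨b, -, h⟩
    simp at h

lemma eval_charpoly' {n : Type*} [Fintype n] [DecidableEq n] (M : Matrix n n ℝ) (x : ℝ) :
    (M.charpoly).eval x = (x • (1 : Matrix n n ℝ) - M).det := by
  rw [Matrix.charpoly, ← Polynomial.coe_evalRingHom, RingHom.map_det]
  congr 1
  ext i j
  by_cases h : i = j <;>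
    simp [h, Matrix.charmatrix_apply, Matrix.one_apply, Matrix.diagonal_apply]

lemma corona_det_eq (H : SimpleGraph W) (G : SimpleGraph V) (α x : ℝ)
    (hS : IsUnit ((x - α) • (1 : Matrix V V ℝ) - Aalpha G α).det) :
    (x • (1 : Matrix (W ⊕ W × V) (W ⊕ W × V) ℝ) - Aalpha (corona H G) α).det =
      ((x - α) • (1 : Matrix V V ℝ) - Aalpha G α).det ^ Fintype.card W *
      ((x - α * Fintype.card V) • (1 : Matrix W W ℝ) - Aalpha H α
        - ((1 - α) ^ 2 * coronal (Aalpha G α) (x - α)) • 1).det := by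
  classical
  set S : Matrix V V ℝ := (x - α) • 1 - Aalpha G α with hSdef
  set A : Matrix W W ℝ := (x - α * Fintype.card V) • 1 - Aalpha H α with hA
  set B : Matrix W (W × V) ℝ := Matrix.of fun w p => if w = p.1 then -(1 - α) else 0 with hB
  set Ct : Matrix (W × V) W ℝ := Matrix.of fun p w => if p.1 = w then -(1 - α) else 0 with hCt
  set D : Matrix (W × V) (W × V) ℝ :=
    Matrix.of fun p q => if p.1 = q.1 then S p.2 q.2 else 0 with hD
  set D' : Matrix (W × V) (W × V) ℝ :=
    Matrix.of fun p q => if p.1 = q.1 then S⁻¹ p.2 q.2 else 0 with hD'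
  have hSS : S * S⁻¹ = 1 := Matrix.mul_nonsing_inv _ hS
  have hblocks : x • (1 : Matrix (W ⊕ W × V) (W ⊕ W × V) ℝ) - Aalpha (corona H G) α
      = Matrix.fromBlocks A B Ct D := by
    ext i j
    rcases i with w | p <;> rcases j with w' | q <;>
      simp only [Matrix.sub_apply, Matrix.smul_apply, smul_eq_mul, Matrix.fromBlocks_apply₁₁,
        Matrix.fromBlocks_apply₁₂, Matrix.fromBlocks_apply₂₁, Matrix.fromBlocks_apply₂₂,
        hA, hB, hCt, hD, hSdef, Aalpha, Matrix.add_apply, degMatrix, adjMat, Matrix.of_apply,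
        Matrix.one_apply, corona_adj_inl_inl, corona_adj_inl_inr, corona_adj_inr_inl,
        corona_adj_inr_inr, Sum.inl.injEq, Sum.inr.injEq, reduceCtorEq, if_false]
    · by_cases h : w = w'
      · subst h
        rw [if_pos rfl, if_pos rfl, if_pos rfl, corona_deg_inl H G w]
        rw [if_neg (H.irrefl)]
        push_cast
        ring
      · simp [h]
    · by_cases h : w = q.1 <;> simp [h] <;> ring
    · by_cases h : w' = p.1
      · subst h; simp
      · simp [h, Ne.symm h]
    · rcases p with ⟨a, b⟩; rcases q with ⟨c, d⟩
      by_cases h1 : a = c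
      · subst h1
        by_cases h2 : b = d
        · subst h2
          rw [corona_deg_inr]
          simp [G.irrefl]
          push_cast
          ring
        · simp [h2, Prod.ext_iff]
      · simp [h1, Prod.ext_iff]
  have hDD : D * D' = 1 := by
    ext ⟨w, v⟩ ⟨w', v'⟩
    rw [Matrix.mul_apply, Fintype.sum_prod_type]
    simp only [hD, hD', Matrix.of_apply, ite_mul, zero_mul, mul_ite, mul_zero]
    rw [Finset.sum_eq_single w (fun a _ ha => by simp [Ne.symm ha]) (by simp)]
    by_cases h : w = w'
    · subst h
      simp only [if_pos rfl, if_true]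
      rw [← Matrix.mul_apply, hSS]
      simp [Matrix.one_apply, Prod.ext_iff]
    · simp [h, Matrix.one_apply, Prod.ext_iff]
  have : Invertible D := invertibleOfRightInverse _ _ hDD
  have hinvD : ⅟ D = D' := invOf_eq_right_inv hDD
  have hdetD : D.det = S.det ^ Fintype.card W := by
    have : D = Matrix.reindex (Equiv.prodComm V W) (Equiv.prodComm V W)
        (Matrix.blockDiagonal fun _ : W => S) := by
      ext ⟨w, v⟩ ⟨w', v'⟩
      simp [hD, Matrix.blockDiagonal_apply]
    rw [this, Matrix.det_reindex_self, Matrix.det_blockDiagonal, Finset.prod_const,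
      Finset.card_univ]
  have hBD : ∀ (w : W) (q : W × V), (B * D') w q
      = if w = q.1 then -(1 - α) * ∑ b, S⁻¹ b q.2 else 0 := by
    intro w q
    rw [Matrix.mul_apply, Fintype.sum_prod_type]
    rw [Finset.sum_eq_single w (fun a _ ha => by simp [hB, Ne.symm ha]) (by simp)]
    by_cases h : w = q.1
    · simp [hB, hD', h, Finset.mul_sum]
    · simp [hB, hD', h]
  have hcor : coronal (Aalpha G α) (x - α) = ∑ i, ∑ j, S⁻¹ i j := by
    rw [hSdef]
    unfold coronal
    congr!
  have hschur : B * ⅟ D * Ct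
      = ((1 - α) ^ 2 * coronal (Aalpha G α) (x - α)) • (1 : Matrix W W ℝ) := by
    rw [hinvD]
    ext w w'
    rw [Matrix.mul_apply, Fintype.sum_prod_type]
    simp only [hBD, hCt, Matrix.of_apply, ite_mul, mul_ite, zero_mul, mul_zero]
    rw [Finset.sum_eq_single w (fun a _ ha => by simp [Ne.symm ha]) (by simp)]
    by_cases h : w = w'
    · subst h
      simp only [if_pos rfl, if_true, Matrix.smul_apply, Matrix.one_apply_eq, mul_one,
        smul_eq_mul, hcor]
      calc (∑ b : V, (-(1 - α) * ∑ c, S⁻¹ c b) * -(1 - α))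
          = ∑ b : V, ∑ c : V, (1 - α) ^ 2 * S⁻¹ c b := by
            refine Finset.sum_congr rfl fun b _ => ?_
            rw [Finset.mul_sum, Finset.sum_mul]
            exact Finset.sum_congr rfl fun c _ => by ring
        _ = (1 - α) ^ 2 * ∑ c : V, ∑ b : V, S⁻¹ c b := by
            rw [Finset.sum_comm, Finset.mul_sum]
            exact Finset.sum_congr rfl fun c _ => by rw [Finset.mul_sum]
    · simp [h, Matrix.one_apply, Matrix.smul_apply]
  rw [hblocks, Matrix.det_fromBlocks₂₂, hdetD, hschur]

end Aux

theorem corona_isospectral_right {V₁ V₂ W : Type*} [Fintype V₁] [Fintype V₂] [Fintype W]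
    [DecidableEq V₁] [DecidableEq V₂] [DecidableEq W]
    (H : SimpleGraph W) (G₁ : SimpleGraph V₁) (G₂ : SimpleGraph V₂)
    (α : ℝ) (h0 : 0 ≤ α) (h1 : α ≤ 1)
    (hspec : (Aalpha G₁ α).charpoly = (Aalpha G₂ α).charpoly)
    (hcor : ∀ ν : ℝ, coronal (Aalpha G₁ α) ν = coronal (Aalpha G₂ α) ν) :
    (Aalpha (corona H G₁) α).charpoly = (Aalpha (corona H G₂) α).charpoly := by
  classical
  have hcard : Fintype.card V₁ = Fintype.card V₂ := by
    rw [← Matrix.charpoly_natDegree_eq_dim (Aalpha G₁ α),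
      ← Matrix.charpoly_natDegree_eq_dim (Aalpha G₂ α), hspec]
  set q := (Aalpha G₁ α).charpoly with hq
  have hq0 : q ≠ 0 := (Aalpha G₁ α).charpoly_monic.ne_zero
  have hfin : {x : ℝ | Polynomial.eval (x - α) q = 0}.Finite := by
    refine ((Polynomial.finite_setOf_isRoot hq0).image (fun y => y + α)).subset ?_
    intro x hx
    exact ⟨x - α, hx, by ring⟩
  have hinf : ({x : ℝ | Polynomial.eval (x - α) q = 0}ᶜ).Infinite := hfin.infinite_compl
  refine Polynomial.eq_of_infinite_eval_eq _ _ (hinf.mono ?_)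
  intro x hx
  have hx' : Polynomial.eval (x - α) q ≠ 0 := hx
  have hS1 : IsUnit ((x - α) • (1 : Matrix V₁ V₁ ℝ) - Aalpha G₁ α).det := by
    rw [← eval_charpoly']
    exact isUnit_iff_ne_zero.2 hx'
  have hS2 : IsUnit ((x - α) • (1 : Matrix V₂ V₂ ℝ) - Aalpha G₂ α).det := by
    rw [← eval_charpoly', ← hspec]
    exact isUnit_iff_ne_zero.2 hx'
  show Polynomial.eval x _ = Polynomial.eval x _
  rw [eval_charpoly', eval_charpoly', corona_det_eq H G₁ α x hS1, corona_det_eq H G₂ α x hS2,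
    hcard, hcor (x - α)]
  congr 2
  rw [← eval_charpoly', ← eval_charpoly', ← hq, hspec]
end
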